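/- Rank uniformity: if Z_1,...,Z_{n+1} are exchangeable real random variables that are almost surely pairwise distinct, then the rank of Z_{n+1} among Z_1,...,Z_{n+1} is uniformly distributed on {1,...,n+1}. -/

import Mathlib

open MeasureTheory ProbabilityTheory

open scoped ENNReal

lemma card_filter_perm' {α : Type*} [Fintype α] [DecidableEq α] (σ : Equiv.Perm α)
    (p : α → Prop) [DecidablePred p] :
    (Finset.univ.filter fun i => p (σ i)).card = (Finset.univ.filter p).card := by
  apply Finset.card_bij (fun a _ => σ a)
  · intro a ha; simp only [Finset.mem_filter, Finset.mem_univ, true_and] at ha ⊢; exact ha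
  · intro a _ b _ h; exact σ.injective h
  · intro b hb
    refine ⟨σ⁻¹ b, ?_, by simp⟩
    simp only [Finset.mem_filter, Finset.mem_univ, true_and] at hb ⊢
    simpa using hb

lemma rank_inj' {m : ℕ} (v : Fin m → ℝ) (hv : ∀ i j, i ≠ j → v i ≠ v j)
    {j j' : Fin m}
    (h : (Finset.univ.filter fun i => v i ≤ v j).card
        = (Finset.univ.filter fun i => v i ≤ v j').card) : j = j' := by
  by_contra hne
  wlog hlt : v j < v j' generalizing j j'
  · exact this h.symm (Ne.symm hne)
      (lt_of_le_of_ne (not_lt.mp hlt) (hv _ _ (Ne.symm hne)))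
  have hsub : (Finset.univ.filter fun i => v i ≤ v j)
      ⊆ (Finset.univ.filter fun i => v i ≤ v j') :=
    by intro i hi
       simp only [Finset.mem_filter, Finset.mem_univ, true_and] at hi ⊢
       exact le_trans hi hlt.le
  have hmem : j' ∈ (Finset.univ.filter fun i => v i ≤ v j') := by simp
  have hnmem : j' ∉ (Finset.univ.filter fun i => v i ≤ v j) := by
    simp [not_le.mpr hlt]
  have : (Finset.univ.filter fun i => v i ≤ v j).card
      < (Finset.univ.filter fun i => v i ≤ v j').card :=
    Finset.card_lt_card ⟨hsub, fun h2 => hnmem (h2 hmem)⟩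
  omega

lemma rank_exists' {m : ℕ} (v : Fin (m + 1) → ℝ) (hv : ∀ i j, i ≠ j → v i ≠ v j)
    (k : ℕ) (hk1 : 1 ≤ k) (hk2 : k ≤ m + 1) :
    ∃ j, (Finset.univ.filter fun i => v i ≤ v j).card = k := by
  have hb : ∀ j : Fin (m + 1),
      1 ≤ (Finset.univ.filter fun i => v i ≤ v j).card ∧
      (Finset.univ.filter fun i => v i ≤ v j).card ≤ m + 1 := by
    intro j
    constructor
    · exact Finset.card_pos.mpr ⟨j, by simp⟩
    · simpa using Finset.card_filter_le Finset.univ (fun i => v i ≤ v j)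
  let f : Fin (m + 1) → Fin (m + 1) := fun j =>
    ⟨(Finset.univ.filter fun i => v i ≤ v j).card - 1, by have := hb j; omega⟩
  have hinj : Function.Injective f := by
    intro j j' h
    have h' := congrArg Fin.val h
    simp only [f] at h'
    have h1 := hb j; have h2 := hb j'
    exact rank_inj' v hv (by omega)
  obtain ⟨j, hj⟩ := Finite.injective_iff_surjective.mp hinj ⟨k - 1, by omega⟩
  have hj' := congrArg Fin.val hj
  simp only [f] at hj'
  have := hb j
  exact ⟨j, by omega⟩

/-- Rank uniformity: if `Z 0, ..., Z n` are exchangeable real random variables that are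
almost surely pairwise distinct, then the rank `#{i : Z i ≤ Z (n+1)}` of the last variable
is uniformly distributed on `{1, ..., n+1}`. -/
theorem stmt12 {Ω : Type*} [MeasurableSpace Ω] (P : Measure Ω) [IsProbabilityMeasure P]
    (n : ℕ) (Z : Fin (n + 1) → Ω → ℝ) (hZ : ∀ i, Measurable (Z i))
    (hexch : ∀ σ : Equiv.Perm (Fin (n + 1)),
      Measure.map (fun ω => fun i => Z (σ i) ω) P = Measure.map (fun ω => fun i => Z i ω) P)
    (hdistinct : ∀ i j : Fin (n + 1), i ≠ j → P {ω | Z i ω = Z j ω} = 0)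
    (rank : Ω → ℕ)
    (hrank : ∀ ω, rank ω =
      (Finset.univ.filter fun i : Fin (n + 1) => Z i ω ≤ Z (Fin.last n) ω).card) :
    ∀ k : ℕ, 1 ≤ k → k ≤ n + 1 → P {ω | rank ω = k} = 1 / (n + 1) := by
  classical
  intro k hk1 hk2
  set g : Fin (n + 1) → (Fin (n + 1) → ℝ) → ℕ :=
    fun j v => (Finset.univ.filter fun i => v i ≤ v j).card with hg
  have hgmeas : ∀ j, Measurable (g j) := by
    intro j
    have heq : g j = fun v => ∑ i : Fin (n + 1), if v i ≤ v j then 1 else 0 := by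
      funext v
      show (Finset.univ.filter fun i => v i ≤ v j).card = _
      rw [Finset.card_filter]
    rw [heq]
    exact Finset.measurable_sum _ fun i _ =>
      Measurable.ite (measurableSet_le (measurable_pi_apply i) (measurable_pi_apply j))
        measurable_const measurable_const
  have hZvec : Measurable (fun ω => fun i => Z i ω) := measurable_pi_lambda _ hZ
  set E : Fin (n + 1) → Set Ω := fun j => {ω | g j (fun i => Z i ω) = k} with hE
  have hEmeas : ∀ j, MeasurableSet (E j) := fun j =>
    ((hgmeas j).comp hZvec) (measurableSet_singleton k)
  have hS : MeasurableSet {v : Fin (n + 1) → ℝ | g (Fin.last n) v = k} :=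
    hgmeas _ (measurableSet_singleton k)
  -- all events equiprobable
  have hEq : ∀ j, P (E j) = P (E (Fin.last n)) := by
    intro j
    set σ := Equiv.swap j (Fin.last n) with hσdef
    have hσ := hexch σ
    have hmeasσ : Measurable (fun ω => fun i => Z (σ i) ω) :=
      measurable_pi_lambda _ fun i => hZ _
    have h1 : P (E (Fin.last n))
        = Measure.map (fun ω => fun i => Z i ω) P {v | g (Fin.last n) v = k} := by
      rw [Measure.map_apply hZvec hS]; rfl
    have h2 : Measure.map (fun ω => fun i => Z (σ i) ω) P {v | g (Fin.last n) v = k}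
        = P (E j) := by
      rw [Measure.map_apply hmeasσ hS]
      congr 1
      ext ω
      simp only [Set.mem_preimage, Set.mem_setOf_eq, hE, hg, hσdef,
        Equiv.swap_apply_right]
      rw [card_filter_perm' (Equiv.swap j (Fin.last n)) (fun i => Z i ω ≤ Z j ω)]
    rw [h1, ← hσ, h2]
  -- distinctness set
  set D : Set Ω := {ω | ∀ i j : Fin (n + 1), i ≠ j → Z i ω ≠ Z j ω} with hD
  have hDmeas : MeasurableSet D := by
    have : D = ⋂ i, ⋂ j, ⋂ (_ : i ≠ j), {ω | Z i ω = Z j ω}ᶜ := by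
      ext ω; simp [hD]
    rw [this]
    exact MeasurableSet.iInter fun i => MeasurableSet.iInter fun j =>
      MeasurableSet.iInter fun _ => (measurableSet_eq_fun (hZ i) (hZ j)).compl
  have hDcnull : P Dᶜ = 0 := by
    have hsub : Dᶜ ⊆ ⋃ i, ⋃ j, ⋃ (_ : i ≠ (j : Fin (n + 1))), {ω | Z i ω = Z j ω} := by
      intro ω hω
      simp only [hD, Set.mem_compl_iff, Set.mem_setOf_eq, not_forall] at hω
      obtain ⟨i, j, hij, h⟩ := hω
      simp only [Set.mem_iUnion]
      exact ⟨i, j, hij, not_not.mp h⟩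
    refine measure_mono_null hsub ?_
    refine measure_iUnion_null fun i => measure_iUnion_null fun j =>
      measure_iUnion_null fun hij => hdistinct i j hij
  have hPD : P D = 1 := (prob_compl_eq_zero_iff hDmeas).mp hDcnull
  -- partition
  have hdisj : Pairwise (Function.onFun Disjoint (fun j => E j ∩ D)) := by
    intro j j' hne
    refine Set.disjoint_left.mpr ?_
    rintro ω ⟨hj, hωD⟩ ⟨hj', _⟩
    exact hne (rank_inj' (fun i => Z i ω) hωD (hj.trans hj'.symm))
  have hunion : (⋃ j, E j ∩ D) = D := by
    ext ω
    simp only [Set.mem_iUnion, Set.mem_inter_iff]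
    constructor
    · rintro ⟨j, _, h⟩; exact h
    · intro hωD
      obtain ⟨j, hj⟩ := rank_exists' (fun i => Z i ω) hωD k hk1 hk2
      exact ⟨j, hj, hωD⟩
  have hsum : ∑ j : Fin (n + 1), P (E j ∩ D) = 1 := by
    rw [← tsum_fintype (L := SummationFilter.unconditional _), ← measure_iUnion hdisj fun j => (hEmeas j).inter hDmeas,
      hunion, hPD]
  have hEjD : ∀ j, P (E j ∩ D) = P (E j) := fun j => measure_inter_conull hDcnull
  have hsum' : (n + 1 : ℝ≥0∞) * P (E (Fin.last n)) = 1 := by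
    have : ∑ j : Fin (n + 1), P (E (Fin.last n)) = 1 := by
      rw [← hsum]; exact Finset.sum_congr rfl fun j _ => ((hEjD j).trans (hEq j)).symm
    rw [Finset.sum_const, Finset.card_univ, Fintype.card_fin, nsmul_eq_mul] at this
    rwa [Nat.cast_add, Nat.cast_one] at this
  have hlast : {ω | rank ω = k} = E (Fin.last n) := by
    ext ω
    simp only [Set.mem_setOf_eq, hE, hg, hrank ω]
  rw [hlast]
  rw [ENNReal.eq_div_iff (by simp) (by simp)]
  exact hsum'
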